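/- Let R = {(z₁, z₂) ∈ ℂ² : (Re z₂)·((Re z₁)² + (Im z₁)²) = (Re z₁)³ and Im z₂ = 0} (Cartan's umbrella) and let p = (0, c) with c ∈ ℝ, c ≠ 0. Then: (a) there is an open neighborhood V of p in ℂ² with R ∩ V = {z ∈ V : z₁ = 0 and Im z₂ = 0}; and (b) the germ at p of the complex line L = {z ∈ ℂ² : z₁ = 0} is the smallest complex analytic germ containing the germ of R at p, i.e. R ∩ V′ ⊆ L for some open neighborhood V′ of p, and for every complex analytic subset Y of any open neighborhood of p with R_p ⊆ Y_p one has L_p ⊆ Y_p. -/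

import Mathlib

open scoped ENNReal

noncomputable section

/-- Germ inclusion `R_p ⊆ Q_p`: `R ∩ V ⊆ Q` for some open neighbourhood `V` of `p`. -/
def GermLE {E : Type*} [TopologicalSpace E] (R Q : Set E) (p : E) : Prop :=
  ∃ V : Set E, IsOpen V ∧ p ∈ V ∧ R ∩ V ⊆ Q

/-- `R` is a real analytic subset of the open set `Ω`. -/
def IsRealAnalyticSubset {E : Type*} [NormedAddCommGroup E] [NormedSpace ℝ E]
    (Ω R : Set E) : Prop :=
  R ⊆ Ω ∧ ∀ p ∈ Ω, ∃ U : Set E, IsOpen U ∧ p ∈ U ∧ U ⊆ Ω ∧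
    ∃ (k : ℕ) (φ : Fin k → E → ℝ),
      (∀ i, AnalyticOnNhd ℝ (φ i) U) ∧ R ∩ U = {x ∈ U | ∀ i, φ i x = 0}

/-- `X` is a complex analytic subset of the open set `W`. -/
def IsComplexAnalyticSubset {E : Type*} [NormedAddCommGroup E] [NormedSpace ℂ E]
    (W X : Set E) : Prop :=
  X ⊆ W ∧ ∀ p ∈ W, ∃ U : Set E, IsOpen U ∧ p ∈ U ∧ U ⊆ W ∧
    ∃ (k : ℕ) (φ : Fin k → E → ℂ),
      (∀ i, AnalyticOnNhd ℂ (φ i) U) ∧ X ∩ U = {x ∈ U | ∀ i, φ i x = 0}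

/-- The local (Hausdorff) dimension of `R` at `p`. -/
def locDim {E : Type*} [EMetricSpace E] (R : Set E) (p : E) : ℝ≥0∞ :=
  ⨅ (U : Set E) (_ : IsOpen U) (_ : p ∈ U), dimH (R ∩ U)

/-- `X` represents the smallest complex analytic germ at `p` containing the germ of `R`. -/
def IsSmallestComplexGermAt {E : Type*} [NormedAddCommGroup E] [NormedSpace ℂ E]
    (R : Set E) (p : E) (X : Set E) : Prop :=
  (∃ U : Set E, IsOpen U ∧ p ∈ U ∧ IsComplexAnalyticSubset U X) ∧
  GermLE R X p ∧
  ∀ (U' Y : Set E), IsOpen U' → p ∈ U' → IsComplexAnalyticSubset U' Y →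
    GermLE R Y p → GermLE X Y p

/-- `S` is closed and nowhere dense in `R` (with its subspace topology). -/
def ClosedNowhereDenseIn {E : Type*} [TopologicalSpace E] (R S : Set E) : Prop :=
  S ⊆ R ∧ IsClosed {x : R | (x : E) ∈ S} ∧ interior {x : R | (x : E) ∈ S} = ∅

/-- Cartan's umbrella `{x₂(x₁² + y₁²) = x₁³, y₂ = 0} ⊆ ℂ²`. -/
def cartanUmbrella : Set (ℂ × ℂ) :=
  {z | z.2.re * (z.1.re ^ 2 + z.1.im ^ 2) = z.1.re ^ 3 ∧ z.2.im = 0}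


private lemma umbrella_local (c : ℝ) :
    cartanUmbrella ∩ Metric.ball ((0 : ℂ), (c : ℂ)) (|c|/2)
      = {z ∈ Metric.ball ((0 : ℂ), (c : ℂ)) (|c|/2) | z.1 = 0 ∧ z.2.im = 0} := by
  ext z
  simp only [Set.mem_inter_iff, Set.mem_setOf_eq, cartanUmbrella, Metric.mem_ball,
    Prod.dist_eq, max_lt_iff, Complex.dist_eq]
  constructor
  · rintro ⟨⟨heq, him⟩, h1, h2⟩
    refine ⟨⟨h1, h2⟩, ?_, him⟩
    set a := z.1.re; set b := z.1.im; set x := z.2.re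
    have hn1 : a^2 + b^2 < c^2/4 := by
      have := Complex.sq_norm z.1
      have habs : ‖z.1‖ < |c|/2 := by simpa using h1
      have : a^2 + b^2 = (‖z.1‖)^2 := by
        rw [Complex.sq_norm, Complex.normSq_apply]; ring
      nlinarith [norm_nonneg z.1, abs_nonneg c, sq_abs c]
    have hn2 : (x - c)^2 < c^2/4 := by
      have h2' : ‖z.2 - c‖ < |c|/2 := by simpa using h2
      have hre : |x - c| ≤ ‖z.2 - c‖ := by
        simpa using Complex.abs_re_le_norm (z.2 - c)
      nlinarith [abs_nonneg (x - c), sq_abs (x - c), sq_abs c, abs_nonneg c]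
    have hab : a^2 + b^2 ≤ 0 := by
      by_contra hpos
      push_neg at hpos
      have hx2 : x^2 * (a^2+b^2)^2 = a^6 := by
        have : (x*(a^2+b^2))^2 = (a^3)^2 := by rw [heq]
        nlinarith [this]
      have h6 : a^6 ≤ (a^2+b^2)^3 := by nlinarith [sq_nonneg a, sq_nonneg b, sq_nonneg (a*b)]
      have hxle : x^2 ≤ a^2 + b^2 := by
        by_contra hgt
        push_neg at hgt
        have : (a^2+b^2) * (a^2+b^2)^2 < x^2 * (a^2+b^2)^2 :=
          mul_lt_mul_of_pos_right hgt (by positivity)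
        nlinarith [this]
      nlinarith [sq_nonneg (x - c), sq_nonneg c, sq_nonneg (x + c)]
    have ha2 : a ^ 2 = 0 := le_antisymm (by nlinarith [sq_nonneg b]) (sq_nonneg a)
    have hb2 : b ^ 2 = 0 := le_antisymm (by nlinarith [sq_nonneg a]) (sq_nonneg b)
    have ha : a = 0 := by
      have := sq_eq_zero_iff.mp ha2; simpa using this
    have hb : b = 0 := by
      have := sq_eq_zero_iff.mp hb2; simpa using this
    exact Complex.ext ha hb
  · rintro ⟨⟨h1, h2⟩, hz1, him⟩
    refine ⟨⟨?_, him⟩, h1, h2⟩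
    simp [hz1]

/-- At a point `p = (0, c)`, `c ∈ ℝ \ {0}`, Cartan's umbrella coincides with
`{z₁ = 0, y₂ = 0}` near `p`, and the complex line `{z₁ = 0}` is the smallest complex analytic
germ at `p` containing the germ of the umbrella. -/
theorem statement12 (c : ℝ) (hc : c ≠ 0) :
    (∃ V : Set (ℂ × ℂ), IsOpen V ∧ ((0 : ℂ), (c : ℂ)) ∈ V ∧
      cartanUmbrella ∩ V = {z ∈ V | z.1 = 0 ∧ z.2.im = 0}) ∧
    GermLE cartanUmbrella {z : ℂ × ℂ | z.1 = 0} ((0 : ℂ), (c : ℂ)) ∧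
    ∀ (U' Y : Set (ℂ × ℂ)), IsOpen U' → ((0 : ℂ), (c : ℂ)) ∈ U' →
      IsComplexAnalyticSubset U' Y → GermLE cartanUmbrella Y ((0 : ℂ), (c : ℂ)) →
      GermLE {z : ℂ × ℂ | z.1 = 0} Y ((0 : ℂ), (c : ℂ)) := by
  have hr0 : (0 : ℝ) < |c| / 2 := by
    have := abs_pos.mpr hc; linarith
  refine ⟨⟨Metric.ball ((0 : ℂ), (c : ℂ)) (|c|/2), Metric.isOpen_ball,
      Metric.mem_ball_self hr0, umbrella_local c⟩, ?_, ?_⟩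
  · refine ⟨Metric.ball ((0 : ℂ), (c : ℂ)) (|c|/2), Metric.isOpen_ball,
      Metric.mem_ball_self hr0, ?_⟩
    intro z hz
    rw [umbrella_local c] at hz
    exact hz.2.1
  intro U' Y hU' hpU' hYan hRY
  obtain ⟨hYsub, hloc⟩ := hYan
  obtain ⟨U, hUopen, hpU, hUsub, k, φ, hφ, hYU⟩ := hloc _ hpU'
  obtain ⟨V₀, hV₀open, hpV₀, hRV₀⟩ := hRY
  -- the set of w with (0, w) ∈ U ∩ V₀ is open in ℂ and contains c
  set W : Set ℂ := {w : ℂ | ((0 : ℂ), w) ∈ U ∩ V₀} with hW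
  have hWopen : IsOpen W :=
    (hUopen.inter hV₀open).preimage (Continuous.prodMk continuous_const continuous_id)
  have hcW : (c : ℂ) ∈ W := ⟨hpU, hpV₀⟩
  obtain ⟨r, hr, hball⟩ := Metric.isOpen_iff.mp hWopen _ hcW
  -- each φ i vanishes on {0} × (real points near c)
  have hzero : ∀ (t : ℝ), t ≠ 0 → |t| < r → ∀ i, φ i ((0 : ℂ), (c : ℂ) + (t : ℂ)) = 0 := by
    intro t ht htr i
    have hmem : ((c : ℂ) + (t : ℂ)) ∈ Metric.ball (c : ℂ) r := by
      simp [Metric.mem_ball, Complex.dist_eq, Complex.norm_real, htr]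
    have hW' := hball hmem
    have hRmem : ((0 : ℂ), (c : ℂ) + (t : ℂ)) ∈ cartanUmbrella := by
      constructor <;> simp [cartanUmbrella, ← Complex.ofReal_add]
    have hY : ((0 : ℂ), (c : ℂ) + (t : ℂ)) ∈ Y := hRV₀ ⟨hRmem, hW'.2⟩
    have : ((0 : ℂ), (c : ℂ) + (t : ℂ)) ∈ Y ∩ U := ⟨hY, hW'.1⟩
    rw [hYU] at this
    exact this.2 i
  -- hence each gᵢ := φ i (0, ·) vanishes frequently at c
  have hfreq : ∀ i, ∃ᶠ w in nhdsWithin (c : ℂ) {(c : ℂ)}ᶜ, φ i ((0 : ℂ), w) = 0 := by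
    intro i
    rw [Filter.frequently_iff]
    intro s hs
    rw [Metric.mem_nhdsWithin_iff] at hs
    obtain ⟨ε, hε, hsub⟩ := hs
    set t : ℝ := min ε r / 2 with htdef
    have ht0 : 0 < t := by positivity
    refine ⟨(c : ℂ) + (t : ℂ), hsub ⟨?_, ?_⟩, ?_⟩
    · simp only [Metric.mem_ball, Complex.dist_eq]
      rw [add_sub_cancel_left]
      rw [Complex.norm_real, Real.norm_eq_abs, abs_of_pos ht0]
      have := min_le_left ε r
      linarith
    · simp only [Set.mem_compl_iff, Set.mem_singleton_iff]
      intro h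
      have : (t : ℂ) = 0 := by linear_combination h
      exact ht0.ne' (by exact_mod_cast this)
    · refine hzero t ht0.ne' ?_ i
      rw [abs_of_pos ht0]
      have := min_le_right ε r
      linarith
  -- each gᵢ is analytic on the ball, so it vanishes identically there
  have hEq : ∀ i, Set.EqOn (fun w => φ i ((0 : ℂ), w)) 0 (Metric.ball (c : ℂ) r) := by
    intro i
    have han : AnalyticOnNhd ℂ (fun w => φ i ((0 : ℂ), w)) (Metric.ball (c : ℂ) r) := by
      intro w hw
      have h1 : AnalyticAt ℂ (φ i) ((0 : ℂ), w) := hφ i _ (hball hw).1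
      have h2 : AnalyticAt ℂ (fun w : ℂ => ((0 : ℂ), w)) w :=
        analyticAt_const.prod analyticAt_id
      exact h1.comp h2
    exact han.eqOn_zero_of_preconnected_of_frequently_eq_zero
      (convex_ball _ _).isPreconnected (Metric.mem_ball_self hr) (hfreq _)
  -- conclude: V' = U ∩ (univ ×ˢ ball c r)
  refine ⟨U ∩ (Set.univ ×ˢ Metric.ball (c : ℂ) r), hUopen.inter
    (isOpen_univ.prod Metric.isOpen_ball), ⟨hpU, trivial, Metric.mem_ball_self hr⟩, ?_⟩
  rintro z ⟨hz1, hzU, -, hz2⟩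
  have hzeq : z = ((0 : ℂ), z.2) := Prod.ext hz1 rfl
  have : z ∈ Y ∩ U := by
    rw [hYU]
    exact ⟨hzU, fun i => by rw [hzeq]; exact hEq i hz2⟩
  exact this.1
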